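/- (Main Theorem) The assignment sending a commutative †-Frobenius monoid (m, u) on H to its set of copyable elements is a bijection between the set of commutative †-Frobenius monoid structures on H and the set of orthogonal bases of H (i.e., sets B ⊆ H of pairwise-orthogonal nonzero vectors that span H). -/

import Mathlib

noncomputable section

open scoped TensorProduct ComplexConjugate InnerProductSpace

open scoped TensorProduct ComplexConjugate InnerProductSpace

variable {H : Type*} [NormedAddCommGroup H] [InnerProductSpace ℂ H] [FiniteDimensional ℂ H]

namespace TensorIP

variable (H) in
/-- A basis of `H ⊗ H` built from an orthonormal basis of `H`. -/
def tb : Module.Basis (Fin (Module.finrank ℂ H) × Fin (Module.finrank ℂ H)) ℂ (H ⊗[ℂ] H) :=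
  Module.Basis.tensorProduct (stdOrthonormalBasis ℂ H).toBasis (stdOrthonormalBasis ℂ H).toBasis

variable (H) in
/-- The canonical inner product space structure on `H ⊗ H`, which is determined by
`⟪a ⊗ b, c ⊗ d⟫ = ⟪a,c⟫ * ⟪b,d⟫` (see `TensorIP.inner_tmul` below). -/
def core : InnerProductSpace.Core ℂ (H ⊗[ℂ] H) where
  inner x y := ∑ p, conj ((tb H).repr x p) * ((tb H).repr y p)
  conj_inner_symm x y := by
    simp only [map_sum, map_mul, starRingEnd_self_apply]
    exact Finset.sum_congr rfl fun p _ => by ring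
  re_inner_nonneg x := by
    show 0 ≤ RCLike.re (∑ p, conj ((tb H).repr x p) * ((tb H).repr x p))
    have h : ∀ p : Fin (Module.finrank ℂ H) × Fin (Module.finrank ℂ H),
        conj ((tb H).repr x p) * ((tb H).repr x p)
          = ((Complex.normSq ((tb H).repr x p) : ℝ) : ℂ) := fun p => by
      rw [mul_comm, Complex.mul_conj]
    simp only [h]
    rw [map_sum]
    refine Finset.sum_nonneg fun p _ => ?_
    simp [Complex.normSq_nonneg]
  add_left x y z := by
    simp only [map_add, Finsupp.add_apply]
    rw [← Finset.sum_add_distrib]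
    exact Finset.sum_congr rfl fun p _ => by ring
  smul_left x y r := by
    simp only [map_smul, Finsupp.smul_apply, smul_eq_mul, map_mul, Finset.mul_sum]
    exact Finset.sum_congr rfl fun p _ => by ring
  definite x hx := by
    have hx' : ∑ p, conj ((tb H).repr x p) * ((tb H).repr x p) = 0 := hx
    have h2 : ∑ p, ((Complex.normSq ((tb H).repr x p) : ℝ) : ℂ) = 0 := by
      rw [← hx']
      exact Finset.sum_congr rfl fun p _ => by rw [mul_comm, Complex.mul_conj]
    have h3 : ∑ p, Complex.normSq ((tb H).repr x p) = 0 := by exact_mod_cast h2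
    have h4 : ∀ p ∈ Finset.univ, Complex.normSq ((tb H).repr x p) = 0 :=
      (Finset.sum_eq_zero_iff_of_nonneg fun p _ => Complex.normSq_nonneg _).mp h3
    have h5 : (tb H).repr x = 0 := by
      ext p
      exact Complex.normSq_eq_zero.mp (h4 p (Finset.mem_univ p))
    simpa using (tb H).repr.map_eq_zero_iff.mp h5

instance : NormedAddCommGroup (H ⊗[ℂ] H) :=
  @InnerProductSpace.Core.toNormedAddCommGroup ℂ (H ⊗[ℂ] H) _ _ _ (core H)

instance : InnerProductSpace ℂ (H ⊗[ℂ] H) := InnerProductSpace.ofCore (core H).toCore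

attribute [-instance] TensorProduct.instInner

theorem inner_tmul (a b c d : H) :
    ⟪a ⊗ₜ[ℂ] b, c ⊗ₜ[ℂ] d⟫_ℂ = ⟪a, c⟫_ℂ * ⟪b, d⟫_ℂ := by
  have key : ∀ (x y : H) (p : Fin (Module.finrank ℂ H) × Fin (Module.finrank ℂ H)),
      (tb H).repr (x ⊗ₜ[ℂ] y) p
        = ⟪(stdOrthonormalBasis ℂ H) p.1, x⟫_ℂ * ⟪(stdOrthonormalBasis ℂ H) p.2, y⟫_ℂ := by
    rintro x y ⟨i, j⟩
    rw [tb, Module.Basis.tensorProduct_repr_tmul_apply, smul_eq_mul,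
      OrthonormalBasis.coe_toBasis_repr_apply, OrthonormalBasis.coe_toBasis_repr_apply,
      OrthonormalBasis.repr_apply_apply, OrthonormalBasis.repr_apply_apply, mul_comm]
  show (∑ p, conj ((tb H).repr (a ⊗ₜ[ℂ] b) p) * ((tb H).repr (c ⊗ₜ[ℂ] d) p)) = _
  simp only [key, map_mul]
  rw [← Finset.univ_product_univ, Finset.sum_product]
  have h : ∀ i j : Fin (Module.finrank ℂ H),
      (conj ⟪(stdOrthonormalBasis ℂ H) i, a⟫_ℂ * conj ⟪(stdOrthonormalBasis ℂ H) j, b⟫_ℂ) *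
        (⟪(stdOrthonormalBasis ℂ H) i, c⟫_ℂ * ⟪(stdOrthonormalBasis ℂ H) j, d⟫_ℂ)
      = (⟪a, (stdOrthonormalBasis ℂ H) i⟫_ℂ * ⟪(stdOrthonormalBasis ℂ H) i, c⟫_ℂ) *
        (⟪b, (stdOrthonormalBasis ℂ H) j⟫_ℂ * ⟪(stdOrthonormalBasis ℂ H) j, d⟫_ℂ) := by
    intro i j
    rw [inner_conj_symm, inner_conj_symm]; ring
  simp only [h]
  rw [← Finset.sum_mul_sum]
  rw [OrthonormalBasis.sum_inner_mul_inner, OrthonormalBasis.sum_inner_mul_inner]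

end TensorIP

/-- `(H, m, u)` is a commutative †-Frobenius monoid: `m` is associative and commutative,
`u 1` is a two-sided unit for `m`, and the Frobenius law
`(m ⊗ id) ∘ (id ⊗ δ) = δ ∘ m` holds, where `δ := m†`. -/
def IsFrobenius (m : H ⊗[ℂ] H →ₗ[ℂ] H) (u : ℂ →ₗ[ℂ] H) : Prop :=
  (m ∘ₗ TensorProduct.map m LinearMap.id
      = m ∘ₗ TensorProduct.map LinearMap.id m ∘ₗ (TensorProduct.assoc ℂ H H H).toLinearMap)
    ∧ (m ∘ₗ (TensorProduct.comm ℂ H H).toLinearMap = m)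
    ∧ (∀ x : H, m (u 1 ⊗ₜ[ℂ] x) = x)
    ∧ (∀ x : H, m (x ⊗ₜ[ℂ] u 1) = x)
    ∧ (TensorProduct.map m LinearMap.id ∘ₗ (TensorProduct.assoc ℂ H H H).symm.toLinearMap
        ∘ₗ TensorProduct.map LinearMap.id (LinearMap.adjoint m)
      = LinearMap.adjoint m ∘ₗ m)

/-- `ψ` is a copyable element: `δ ψ = ψ ⊗ ψ` and `ε ψ = 1`, where `δ := m†`, `ε := u†`. -/
def Copyable (m : H ⊗[ℂ] H →ₗ[ℂ] H) (u : ℂ →ₗ[ℂ] H) (ψ : H) : Prop :=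
  LinearMap.adjoint m ψ = ψ ⊗ₜ[ℂ] ψ ∧ LinearMap.adjoint u ψ = 1

variable (H) in
/-- `B` is an orthogonal basis of `H`: a set of pairwise-orthogonal nonzero vectors
spanning `H`. -/
def IsOrthogonalBasis (B : Set H) : Prop :=
  (∀ ψ ∈ B, ∀ χ ∈ B, ψ ≠ χ → ⟪ψ, χ⟫_ℂ = 0) ∧ (0 : H) ∉ B ∧ Submodule.span ℂ B = ⊤

attribute [-instance] TensorProduct.instInner

section FrobeniusTheory

open TensorProduct

/-- Nondegeneracy of the inner product on `H ⊗ H` against pure tensors. -/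
theorem inner_tensor_ext {z w : H ⊗[ℂ] H}
    (h : ∀ x y : H, ⟪z, x ⊗ₜ[ℂ] y⟫_ℂ = ⟪w, x ⊗ₜ[ℂ] y⟫_ℂ) : z = w := by
  have h' : ∀ v : H ⊗[ℂ] H, ⟪z - w, v⟫_ℂ = 0 := by
    intro v
    induction v using TensorProduct.induction_on with
    | zero => simp
    | tmul x y => rw [inner_sub_left, h, sub_self]
    | add a b ha hb => rw [inner_add_right, ha, hb, add_zero]
  have h2 := h' (z - w)
  rw [inner_self_eq_zero] at h2
  exact sub_eq_zero.mp h2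

theorem adjoint_u_apply (u : ℂ →ₗ[ℂ] H) (ψ : H) :
    LinearMap.adjoint u ψ = conj ⟪ψ, u 1⟫_ℂ := by
  have h : ⟪LinearMap.adjoint u ψ, (1:ℂ)⟫_ℂ = ⟪ψ, u 1⟫_ℂ :=
    LinearMap.adjoint_inner_left u 1 ψ
  rw [RCLike.inner_apply, one_mul] at h
  have := congrArg conj h
  simpa using this

theorem copyable_iff (m : H ⊗[ℂ] H →ₗ[ℂ] H) (u : ℂ →ₗ[ℂ] H) (ψ : H) :
    Copyable m u ψ ↔
      (∀ x y : H, ⟪ψ, m (x ⊗ₜ[ℂ] y)⟫_ℂ = ⟪ψ, x⟫_ℂ * ⟪ψ, y⟫_ℂ) ∧ ⟪ψ, u 1⟫_ℂ = 1 := by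
  constructor
  · rintro ⟨hδ, hε⟩
    refine ⟨fun x y => ?_, ?_⟩
    · rw [← LinearMap.adjoint_inner_left m (x ⊗ₜ[ℂ] y) ψ, hδ, TensorIP.inner_tmul]
    · have h := adjoint_u_apply u ψ
      rw [hε] at h
      have := congrArg conj h
      simpa using this.symm
  · rintro ⟨hc, he⟩
    constructor
    · apply inner_tensor_ext (z := LinearMap.adjoint m ψ) (w := ψ ⊗ₜ[ℂ] ψ)
      intro x y
      rw [LinearMap.adjoint_inner_left m (x ⊗ₜ[ℂ] y) ψ, TensorIP.inner_tmul, hc]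
    · rw [adjoint_u_apply, he, map_one]

end FrobeniusTheory

section FrobeniusCore

open TensorProduct

variable {m : H ⊗[ℂ] H →ₗ[ℂ] H} {u : ℂ →ₗ[ℂ] H}

theorem hmul_comm (hF : IsFrobenius m u) (x y : H) :
    m (x ⊗ₜ[ℂ] y) = m (y ⊗ₜ[ℂ] x) := by
  have h := congrArg (fun f : H ⊗[ℂ] H →ₗ[ℂ] H => f (y ⊗ₜ[ℂ] x)) hF.2.1
  simpa using h

theorem hmul_assoc (hF : IsFrobenius m u) (x y z : H) :
    m (m (x ⊗ₜ[ℂ] y) ⊗ₜ[ℂ] z) = m (x ⊗ₜ[ℂ] m (y ⊗ₜ[ℂ] z)) := by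
  have h := congrArg (fun f : (H ⊗[ℂ] H) ⊗[ℂ] H →ₗ[ℂ] H => f ((x ⊗ₜ[ℂ] y) ⊗ₜ[ℂ] z)) hF.1
  simpa using h

theorem comm_adjoint :
    (TensorProduct.comm ℂ H H).toLinearMap =
      LinearMap.adjoint (TensorProduct.comm ℂ H H).toLinearMap := by
  rw [LinearMap.eq_adjoint_iff]
  intro z w
  induction z using TensorProduct.induction_on with
  | zero => simp
  | tmul x y =>
    induction w using TensorProduct.induction_on with
    | zero => simp
    | tmul p q => simp [TensorIP.inner_tmul, mul_comm]
    | add a b ha hb => simp only [map_add, inner_add_right, ha, hb]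
  | add a b ha hb => simp only [map_add, inner_add_left, ha, hb]

theorem swap_delta (hF : IsFrobenius m u) (x : H) :
    (TensorProduct.comm ℂ H H) (LinearMap.adjoint m x) = LinearMap.adjoint m x := by
  have h1 : LinearMap.adjoint (m ∘ₗ (TensorProduct.comm ℂ H H).toLinearMap)
      = LinearMap.adjoint m := by rw [hF.2.1]
  rw [LinearMap.adjoint_comp, ← comm_adjoint] at h1
  have := congrArg (fun f : H →ₗ[ℂ] H ⊗[ℂ] H => f x) h1
  simpa using this

theorem delta_E1 (hF : IsFrobenius m u) (x : H) :
    LinearMap.adjoint m x = TensorProduct.map m LinearMap.id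
      ((TensorProduct.assoc ℂ H H H).symm (x ⊗ₜ[ℂ] LinearMap.adjoint m (u 1))) := by
  have h := congrArg (fun f : H ⊗[ℂ] H →ₗ[ℂ] H ⊗[ℂ] H => f (x ⊗ₜ[ℂ] u 1)) hF.2.2.2.2
  simp only [LinearMap.comp_apply, LinearEquiv.coe_coe, TensorProduct.map_tmul,
    LinearMap.id_coe, id_eq] at h
  rw [hF.2.2.2.1 x] at h
  exact h.symm

theorem delta_E2 (hF : IsFrobenius m u) (x : H) :
    LinearMap.adjoint m x = TensorProduct.map LinearMap.id m
      ((TensorProduct.assoc ℂ H H H) ((LinearMap.adjoint m (u 1)) ⊗ₜ[ℂ] x)) := by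
  have key : ∀ w : H ⊗[ℂ] H,
      (TensorProduct.comm ℂ H H) (TensorProduct.map m LinearMap.id
        ((TensorProduct.assoc ℂ H H H).symm (x ⊗ₜ[ℂ] w)))
      = TensorProduct.map LinearMap.id m
        ((TensorProduct.assoc ℂ H H H) (((TensorProduct.comm ℂ H H) w) ⊗ₜ[ℂ] x)) := by
    intro w
    induction w using TensorProduct.induction_on with
    | zero => simp
    | tmul p q =>
      simp only [TensorProduct.assoc_symm_tmul, TensorProduct.map_tmul, LinearMap.id_coe,
        id_eq, TensorProduct.comm_tmul, TensorProduct.assoc_tmul]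
      rw [hmul_comm hF x p]
    | add a b ha hb =>
      simp only [TensorProduct.tmul_add, TensorProduct.add_tmul, map_add] at ha hb ⊢
      rw [ha, hb]
  have h1 := swap_delta hF x
  conv_lhs => rw [← h1]
  rw [delta_E1 hF x, key, swap_delta hF (u 1)]

/-- The auxiliary map `p ⊗ q ↦ ⟪a, p⟫ • q`. -/
def gmap (a : H) : H ⊗[ℂ] H →ₗ[ℂ] H :=
  TensorProduct.lift (((innerSL ℂ a).toLinearMap).smulRight (LinearMap.id (R := ℂ) (M := H)))

@[simp] theorem gmap_tmul (a p q : H) : gmap a (p ⊗ₜ[ℂ] q) = ⟪a, p⟫_ℂ • q := by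
  simp [gmap]

theorem gmap_inner (a : H) (w : H ⊗[ℂ] H) (y : H) :
    ⟪gmap a w, y⟫_ℂ = ⟪w, a ⊗ₜ[ℂ] y⟫_ℂ := by
  induction w using TensorProduct.induction_on with
  | zero => simp
  | tmul p q =>
    rw [gmap_tmul, inner_smul_left, inner_conj_symm, TensorIP.inner_tmul]
  | add s t hs ht => rw [map_add, inner_add_left, inner_add_left, hs, ht]

/-- Multiplication operator. -/
def Mop (m : H ⊗[ℂ] H →ₗ[ℂ] H) (a : H) : H →ₗ[ℂ] H := m ∘ₗ (TensorProduct.mk ℂ H H a)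

@[simp] theorem Mop_apply (a x : H) : Mop m a x = m (a ⊗ₜ[ℂ] x) := rfl

theorem adjoint_Mop (hF : IsFrobenius m u) (a : H) :
    LinearMap.adjoint (Mop m a) = Mop m (gmap a (LinearMap.adjoint m (u 1))) := by
  ext x
  apply ext_inner_right ℂ
  intro y
  rw [LinearMap.adjoint_inner_left]
  have h1 : ⟪x, Mop m a y⟫_ℂ = ⟪gmap a (LinearMap.adjoint m x), y⟫_ℂ := by
    rw [gmap_inner, Mop_apply, LinearMap.adjoint_inner_left]
  rw [h1]
  have key : ∀ w : H ⊗[ℂ] H,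
      gmap a (TensorProduct.map LinearMap.id m ((TensorProduct.assoc ℂ H H H) (w ⊗ₜ[ℂ] x)))
      = m ((gmap a w) ⊗ₜ[ℂ] x) := by
    intro w
    induction w using TensorProduct.induction_on with
    | zero => simp
    | tmul p q =>
      simp only [TensorProduct.assoc_tmul, TensorProduct.map_tmul, LinearMap.id_coe, id_eq,
        gmap_tmul]
      rw [← TensorProduct.smul_tmul', map_smul]
    | add s t hs ht =>
      simp only [TensorProduct.add_tmul, map_add] at hs ht ⊢
      rw [hs, ht]
  rw [delta_E2 hF x, key]
  rfl

theorem Mop_comp (hF : IsFrobenius m u) (p q : H) :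
    Mop m p ∘ₗ Mop m q = Mop m (m (p ⊗ₜ[ℂ] q)) := by
  ext x
  simp only [LinearMap.comp_apply, Mop_apply]
  rw [← hmul_assoc hF]

theorem no_square_zero (hF : IsFrobenius m u) (v : H) (hv : m (v ⊗ₜ[ℂ] v) = 0) : v = 0 := by
  by_contra hv0
  set b := gmap v (LinearMap.adjoint m (u 1)) with hb
  set c := m (b ⊗ₜ[ℂ] v) with hc
  have hvc : m (v ⊗ₜ[ℂ] c) = 0 := by
    rw [hc, ← hmul_assoc hF v b v, hmul_comm hF v b, hmul_assoc hF b v v, hv,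
      TensorProduct.tmul_zero, map_zero]
  have hcc : m (c ⊗ₜ[ℂ] c) = 0 := by
    conv_lhs => rw [hc]
    rw [hmul_assoc hF b v c, hvc, TensorProduct.tmul_zero, map_zero]
  have hP : Mop m c ∘ₗ Mop m c = 0 := by
    rw [Mop_comp hF, hcc]
    ext x
    simp [Mop_apply, TensorProduct.zero_tmul]
  have hadj : LinearMap.adjoint (Mop m v) = Mop m b := adjoint_Mop hF v
  have hPc : Mop m c = LinearMap.adjoint (Mop m v) ∘ₗ Mop m v := by
    rw [hadj, Mop_comp hF]
  have hsa : LinearMap.adjoint (Mop m c) = Mop m c := by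
    rw [hPc, LinearMap.adjoint_comp, LinearMap.adjoint_adjoint]
  have hzero1 : ∀ x : H, Mop m c x = 0 := by
    intro x
    have h : ⟪Mop m c x, Mop m c x⟫_ℂ = 0 := by
      rw [← LinearMap.adjoint_inner_right, hsa]
      have : Mop m c (Mop m c x) = 0 := by
        have := congrArg (fun f : H →ₗ[ℂ] H => f x) hP
        simpa using this
      rw [this, inner_zero_right]
    exact inner_self_eq_zero.mp h
  have hzero2 : ∀ x : H, Mop m v x = 0 := by
    intro x
    have h : ⟪Mop m v x, Mop m v x⟫_ℂ = 0 := by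
      rw [← LinearMap.adjoint_inner_right]
      have : LinearMap.adjoint (Mop m v) (Mop m v x) = 0 := by
        rw [hadj]
        have := congrArg (fun f : H →ₗ[ℂ] H => f x) (Mop_comp hF b v)
        simp only [LinearMap.comp_apply] at this
        rw [this, ← hc, hzero1]
      rw [this, inner_zero_right]
    exact inner_self_eq_zero.mp h
  apply hv0
  have := hzero2 (u 1)
  rw [Mop_apply, hF.2.2.2.1 v] at this
  exact this

end FrobeniusCore

section FrobeniusMain

open TensorProduct

variable {m : H ⊗[ℂ] H →ₗ[ℂ] H} {u : ℂ →ₗ[ℂ] H}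

theorem exists_common_eigenvector (hF : IsFrobenius m u) (K : Submodule ℂ H) (hbot : K ≠ ⊥)
    (hinv : ∀ (a : H), ∀ x ∈ K, m (a ⊗ₜ[ℂ] x) ∈ K) :
    ∃ v ∈ K, v ≠ 0 ∧ ∀ a : H, ∃ c : ℂ, m (a ⊗ₜ[ℂ] v) = c • v := by
  have main : ∀ (n : ℕ) (K : Submodule ℂ H), Module.finrank ℂ K ≤ n → K ≠ ⊥ →
      (∀ (a : H), ∀ x ∈ K, m (a ⊗ₜ[ℂ] x) ∈ K) →
      ∃ v ∈ K, v ≠ 0 ∧ ∀ a : H, ∃ c : ℂ, m (a ⊗ₜ[ℂ] v) = c • v := by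
    intro n
    induction n with
    | zero =>
      intro K hle hbot _
      exfalso
      apply hbot
      rw [← Submodule.finrank_eq_zero (R := ℂ)]
      omega
    | succ n ih =>
      intro K hle hbot hinv
      by_cases hs : ∀ a : H, ∃ c : ℂ, ∀ x ∈ K, m (a ⊗ₜ[ℂ] x) = c • x
      · obtain ⟨v, hvK, hv0⟩ := Submodule.exists_mem_ne_zero_of_ne_bot hbot
        exact ⟨v, hvK, hv0, fun a => (hs a).imp fun c hc => hc v hvK⟩
      · push_neg at hs
        obtain ⟨a, ha⟩ := hs
        have hres : ∀ x ∈ K, (Mop m a) x ∈ K := fun x hx => hinv a x hx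
        let T : ↥K →ₗ[ℂ] ↥K := (Mop m a).restrict hres
        haveI : Nontrivial ↥K := Submodule.nontrivial_iff_ne_bot.mpr hbot
        obtain ⟨c, hc⟩ := Module.End.exists_eigenvalue T
        obtain ⟨w, hw⟩ := hc.exists_hasEigenvector
        have hweq : m (a ⊗ₜ[ℂ] (w : H)) = c • (w : H) := by
          have h1 : T w = c • w := hw.apply_eq_smul
          have := congrArg (Subtype.val) h1
          simpa [T, LinearMap.restrict_apply] using this
        set E := K ⊓ LinearMap.ker (Mop m a - c • LinearMap.id) with hE
        have hmemE : ∀ x : H, x ∈ E ↔ x ∈ K ∧ m (a ⊗ₜ[ℂ] x) = c • x := by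
          intro x
          simp only [hE, Submodule.mem_inf, LinearMap.mem_ker, LinearMap.sub_apply,
            LinearMap.smul_apply, LinearMap.id_apply, Mop_apply, sub_eq_zero]
        have hEK : E ≤ K := inf_le_left
        have hwE : (w : H) ∈ E := (hmemE _).mpr ⟨w.2, hweq⟩
        have hw0 : (w : H) ≠ 0 := fun h => hw.right (Subtype.ext h)
        have hEbot : E ≠ ⊥ := fun h => hw0 (by rw [h] at hwE; simpa using hwE)
        have hEne : E ≠ K := by
          obtain ⟨x, hxK, hx⟩ := ha c
          intro hEq
          exact hx (((hmemE x).mp (hEq ▸ hxK)).2)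
        have hElt : E < K := lt_of_le_of_ne hEK hEne
        have hEinv : ∀ (b : H), ∀ x ∈ E, m (b ⊗ₜ[ℂ] x) ∈ E := by
          intro b x hx
          obtain ⟨hxK, hxe⟩ := (hmemE x).mp hx
          refine (hmemE _).mpr ⟨hinv b x hxK, ?_⟩
          rw [← hmul_assoc hF a b x, hmul_comm hF a b, hmul_assoc hF b a x, hxe,
            TensorProduct.tmul_smul, map_smul]
        have hlt : Module.finrank ℂ E ≤ n :=
          Nat.lt_succ_iff.mp (lt_of_lt_of_le (Submodule.finrank_lt_finrank_of_lt hElt) hle)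
        obtain ⟨v, hvE, h1, h2⟩ := ih E hlt hEbot hEinv
        exact ⟨v, hEK hvE, h1, h2⟩
  exact main (Module.finrank ℂ K) K le_rfl hbot hinv

theorem copyable_ne_zero (hψ : Copyable m u ψ) : ψ ≠ 0 := by
  intro h
  have h2 := hψ.2
  rw [h, map_zero] at h2
  exact one_ne_zero h2.symm

theorem copyable_orthogonal (hF : IsFrobenius m u) {ψ χ : H}
    (hψ : Copyable m u ψ) (hχ : Copyable m u χ) (hne : ψ ≠ χ) : ⟪ψ, χ⟫_ℂ = 0 := by
  obtain ⟨hψc, hψe⟩ := (copyable_iff m u ψ).1 hψ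
  obtain ⟨hχc, hχe⟩ := (copyable_iff m u χ).1 hχ
  have hχ0 : χ ≠ 0 := copyable_ne_zero hχ
  set a := ψ - χ with hadef
  set b := gmap a (LinearMap.adjoint m (u 1)) with hbdef
  have hab : LinearMap.adjoint (Mop m a) = Mop m b := adjoint_Mop hF a
  have hba : Mop m a = LinearMap.adjoint (Mop m b) := by
    rw [← hab, LinearMap.adjoint_adjoint]
  have heig : LinearMap.adjoint (Mop m b) χ = (conj ⟪χ, b⟫_ℂ) • χ := by
    apply ext_inner_right ℂ
    intro y
    rw [LinearMap.adjoint_inner_left, Mop_apply, hχc b y, inner_smul_left]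
    simp
  have h1 : m (a ⊗ₜ[ℂ] χ) = (conj ⟪χ, b⟫_ℂ) • χ := by
    rw [← Mop_apply, hba, heig]
  have h2 : ⟪χ, a⟫_ℂ * ⟪χ, χ⟫_ℂ = conj ⟪χ, b⟫_ℂ * ⟪χ, χ⟫_ℂ := by
    rw [← hχc a χ, h1, inner_smul_right]
  have hχχ : ⟪χ, χ⟫_ℂ ≠ 0 := fun h => hχ0 (inner_self_eq_zero.mp h)
  have h3 : conj ⟪χ, b⟫_ℂ = ⟪χ, a⟫_ℂ := (mul_right_cancel₀ hχχ h2).symm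
  have h4 : ⟪ψ, a⟫_ℂ * ⟪ψ, χ⟫_ℂ = ⟪χ, a⟫_ℂ * ⟪ψ, χ⟫_ℂ := by
    rw [← hψc a χ, h1, inner_smul_right, h3]
  have h5 : ⟪ψ, a⟫_ℂ - ⟪χ, a⟫_ℂ = ⟪a, a⟫_ℂ := by
    rw [← inner_sub_left]
  have ha0 : a ≠ 0 := sub_ne_zero.mpr hne
  have haa : ⟪a, a⟫_ℂ ≠ 0 := fun h => ha0 (inner_self_eq_zero.mp h)
  have h6 : (⟪ψ, a⟫_ℂ - ⟪χ, a⟫_ℂ) * ⟪ψ, χ⟫_ℂ = 0 := by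
    rw [sub_mul, h4, sub_self]
  rcases mul_eq_zero.mp h6 with h | h
  · exact absurd (h5 ▸ h) haa
  · exact h

theorem copyable_span (hF : IsFrobenius m u) :
    Submodule.span ℂ {ψ : H | Copyable m u ψ} = ⊤ := by
  set S := Submodule.span ℂ {ψ : H | Copyable m u ψ} with hSdef
  by_contra hS
  have hK : Sᗮ ≠ ⊥ := fun h => hS (Submodule.orthogonal_eq_bot_iff.mp h)
  have hinv : ∀ (a : H), ∀ x ∈ Sᗮ, m (a ⊗ₜ[ℂ] x) ∈ Sᗮ := by
    intro a x hx
    rw [Submodule.mem_orthogonal]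
    intro s hs
    induction hs using Submodule.span_induction with
    | mem ψ hψ =>
      rw [((copyable_iff m u ψ).1 hψ).1 a x,
        (Submodule.mem_orthogonal _ _).mp hx ψ (Submodule.subset_span hψ), mul_zero]
    | zero => simp
    | add y z hy hz hy' hz' => rw [inner_add_left, hy', hz', add_zero]
    | smul c y hy hy' => rw [inner_smul_left, hy', mul_zero]
  obtain ⟨v, hvK, hv0, hveig⟩ := exists_common_eigenvector hF Sᗮ hK hinv
  obtain ⟨cv, hcv⟩ := hveig v
  have hcv0 : cv ≠ 0 := by
    intro h
    exact hv0 (no_square_zero hF v (by rw [hcv, h, zero_smul]))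
  set w := cv⁻¹ • v with hwdef
  have hw0 : w ≠ 0 := smul_ne_zero (inv_ne_zero hcv0) hv0
  have hwK : w ∈ Sᗮ := Submodule.smul_mem _ _ hvK
  have hweig : ∀ a : H, ∃ c : ℂ, m (a ⊗ₜ[ℂ] w) = c • w := by
    intro a
    obtain ⟨c, hc⟩ := hveig a
    refine ⟨c, ?_⟩
    rw [hwdef, TensorProduct.tmul_smul, map_smul, hc, smul_comm]
  have hkey : ∀ x : H, ∃ d : ℂ, ∀ y : H, ⟪w, m (x ⊗ₜ[ℂ] y)⟫_ℂ = d * ⟪w, y⟫_ℂ := by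
    intro x
    obtain ⟨c, hc⟩ := hweig (gmap x (LinearMap.adjoint m (u 1)))
    refine ⟨conj c, fun y => ?_⟩
    have h1 : LinearMap.adjoint (Mop m x) w = c • w := by
      rw [adjoint_Mop hF x, Mop_apply, hc]
    calc ⟪w, m (x ⊗ₜ[ℂ] y)⟫_ℂ = ⟪LinearMap.adjoint (Mop m x) w, y⟫_ℂ := by
          rw [LinearMap.adjoint_inner_left, Mop_apply]
      _ = conj c * ⟪w, y⟫_ℂ := by rw [h1, inner_smul_left]
  have hwe : ⟪w, u 1⟫_ℂ ≠ 0 := by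
    intro h0
    apply hw0
    rw [← inner_self_eq_zero (𝕜 := ℂ)]
    obtain ⟨d, hd⟩ := hkey w
    have := hd (u 1)
    rw [hF.2.2.2.1 w, h0, mul_zero] at this
    exact this
  set t := ⟪w, u 1⟫_ℂ with htdef
  set ψ := (conj t)⁻¹ • w with hψdef
  have hψx : ∀ x : H, ⟪ψ, x⟫_ℂ = t⁻¹ * ⟪w, x⟫_ℂ := by
    intro x
    rw [hψdef, inner_smul_left, map_inv₀, Complex.conj_conj]
  have hψcop : Copyable m u ψ := by
    rw [copyable_iff]
    constructor
    · intro x y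
      obtain ⟨d, hd⟩ := hkey x
      have hdx : ⟪w, x⟫_ℂ = d * t := by
        have := hd (u 1)
        rwa [hF.2.2.2.1 x] at this
      rw [hψx, hd y, hψx, hψx, hdx]
      field_simp
    · rw [hψx]
      exact inv_mul_cancel₀ hwe
  have hψS : ψ ∈ S := Submodule.subset_span hψcop
  have hψK : ψ ∈ Sᗮ := Submodule.smul_mem _ _ hwK
  have hψ0 : ψ = 0 := by
    rw [← inner_self_eq_zero (𝕜 := ℂ)]
    exact (Submodule.mem_orthogonal _ _).mp hψK ψ hψS
  exact copyable_ne_zero hψcop hψ0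

theorem mapsTo_frobenius (hF : IsFrobenius m u) :
    IsOrthogonalBasis H {ψ : H | Copyable m u ψ} := by
  refine ⟨?_, ?_, copyable_span hF⟩
  · intro ψ hψ χ hχ hne
    exact copyable_orthogonal hF hψ hχ hne
  · intro h0
    exact copyable_ne_zero h0 rfl

end FrobeniusMain

section Construction

open TensorProduct

variable {ι : Type*} [Fintype ι] [DecidableEq ι] (v : Module.Basis ι ℂ H)

/-- Squared norms of the basis vectors. -/
def nsc (i : ι) : ℂ := ⟪v i, v i⟫_ℂ

/-- The multiplication determined by an orthogonal basis. -/
def mulB : H ⊗[ℂ] H →ₗ[ℂ] H :=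
  TensorProduct.lift (∑ i, (v.coord i).smulRight ((v.coord i).smulRight (nsc v i • v i)))

/-- The unit determined by an orthogonal basis. -/
def unitB : ℂ →ₗ[ℂ] H := LinearMap.toSpanSingleton ℂ H (∑ i, (nsc v i)⁻¹ • v i)

/-- The comultiplication determined by an orthogonal basis. -/
def deltaB : H →ₗ[ℂ] H ⊗[ℂ] H := v.constr ℂ fun i => v i ⊗ₜ[ℂ] v i

theorem mulB_tmul (x y : H) :
    mulB v (x ⊗ₜ[ℂ] y) = ∑ i, v.coord i x • (v.coord i y • (nsc v i • v i)) := by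
  simp [mulB, TensorProduct.lift.tmul, LinearMap.sum_apply, LinearMap.smulRight_apply,
    LinearMap.smul_apply]

theorem repr_sum_smul (a : ι → ℂ) (k : ι) : v.repr (∑ i, a i • v i) k = a k := by
  rw [map_sum]
  rw [Finsupp.finset_sum_apply]
  rw [Finset.sum_eq_single k]
  · simp [Module.Basis.repr_self]
  · intro b _ hb
    simp [Module.Basis.repr_self, Finsupp.single_apply, hb]
  · intro h
    exact absurd (Finset.mem_univ k) h

theorem mulB_basis (i j : ι) :
    mulB v (v i ⊗ₜ[ℂ] v j) = if i = j then nsc v i • v i else 0 := by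
  rw [mulB_tmul]
  rw [Finset.sum_eq_single i]
  · simp only [Module.Basis.coord_apply, Module.Basis.repr_self, Finsupp.single_apply]
    rcases eq_or_ne i j with rfl | hij
    · simp
    · simp [hij, Ne.symm hij]
  · intro k _ hk
    simp [Module.Basis.coord_apply, Module.Basis.repr_self, Finsupp.single_apply, Ne.symm hk]
  · intro h
    exact absurd (Finset.mem_univ i) h

theorem mulB_basis_left (i : ι) (x : H) :
    mulB v (v i ⊗ₜ[ℂ] x) = v.repr x i • (nsc v i • v i) := by
  rw [mulB_tmul]
  rw [Finset.sum_eq_single i]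
  · simp [Module.Basis.coord_apply, Module.Basis.repr_self]
  · intro k _ hk
    simp [Module.Basis.coord_apply, Module.Basis.repr_self, Finsupp.single_apply, Ne.symm hk]
  · intro h
    exact absurd (Finset.mem_univ i) h

theorem mulB_comm_tmul (x y : H) : mulB v (x ⊗ₜ[ℂ] y) = mulB v (y ⊗ₜ[ℂ] x) := by
  rw [mulB_tmul, mulB_tmul]
  exact Finset.sum_congr rfl fun i _ => smul_comm _ _ _

section WithOrth

variable (horth : ∀ i j : ι, i ≠ j → ⟪v i, v j⟫_ℂ = 0)
include horth

theorem inner_basis_right (i : ι) (x : H) : ⟪v i, x⟫_ℂ = nsc v i * v.repr x i := by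
  conv_lhs => rw [← Module.Basis.sum_repr v x]
  rw [inner_sum]
  rw [Finset.sum_eq_single i]
  · rw [inner_smul_right, nsc, mul_comm]
  · intro j _ hj
    rw [inner_smul_right, horth i j (Ne.symm hj), mul_zero]
  · intro h
    exact absurd (Finset.mem_univ i) h

theorem inner_basis_left (i : ι) (x : H) : ⟪x, v i⟫_ℂ = conj (v.repr x i) * nsc v i := by
  rw [← inner_conj_symm, inner_basis_right v horth, map_mul, nsc, inner_conj_symm]
  ring

theorem adjoint_mulB : deltaB v = LinearMap.adjoint (mulB v) := by
  rw [LinearMap.eq_adjoint_iff_basis v (Module.Basis.tensorProduct v v)]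
  rintro i ⟨j, k⟩
  rw [Module.Basis.tensorProduct_apply, deltaB, Module.Basis.constr_basis, TensorIP.inner_tmul,
    mulB_basis]
  rcases eq_or_ne j k with rfl | hjk
  · rw [if_pos rfl, inner_smul_right]
    rcases eq_or_ne i j with rfl | hij
    · rw [nsc, mul_comm]
    · rw [horth i j hij, mul_zero, mul_zero]
  · rw [if_neg hjk, inner_zero_right]
    rcases eq_or_ne i j with rfl | hij
    · rw [horth i k hjk, mul_zero]
    · rw [horth i j hij, zero_mul]

variable (hn0 : ∀ i, nsc v i ≠ 0)
include hn0

theorem inner_basis_unit (i : ι) : ⟪v i, unitB v 1⟫_ℂ = 1 := by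
  rw [unitB, LinearMap.toSpanSingleton_apply_one, inner_sum]
  rw [Finset.sum_eq_single i]
  · rw [inner_smul_right, ← nsc, inv_mul_cancel₀ (hn0 i)]
  · intro j _ hj
    rw [inner_smul_right, horth i j (Ne.symm hj), mul_zero]
  · intro h
    exact absurd (Finset.mem_univ i) h

theorem unitB_mul (x : H) : mulB v (unitB v 1 ⊗ₜ[ℂ] x) = x := by
  rw [unitB, LinearMap.toSpanSingleton_apply_one, TensorProduct.sum_tmul, map_sum]
  have h : ∀ i : ι, mulB v (((nsc v i)⁻¹ • v i) ⊗ₜ[ℂ] x) = v.repr x i • v i := by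
    intro i
    rw [← TensorProduct.smul_tmul', map_smul, mulB_basis_left, smul_smul, smul_smul]
    congr 1
    rw [mul_comm ((nsc v i)⁻¹) (v.repr x i), mul_assoc, inv_mul_cancel₀ (hn0 i), mul_one]
  rw [Finset.sum_congr rfl fun i _ => h i, Module.Basis.sum_repr]

theorem frobB : IsFrobenius (mulB v) (unitB v) := by
  refine ⟨?_, ?_, ?_, ?_, ?_⟩
  · -- associativity
    apply Module.Basis.ext (Module.Basis.tensorProduct (Module.Basis.tensorProduct v v) v)
    rintro ⟨⟨i, j⟩, k⟩
    rw [Module.Basis.tensorProduct_apply, Module.Basis.tensorProduct_apply]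
    simp only [LinearMap.comp_apply, LinearEquiv.coe_coe, TensorProduct.map_tmul,
      LinearMap.id_coe, id_eq, TensorProduct.assoc_tmul]
    rw [mulB_basis, mulB_basis]
    rcases eq_or_ne i j with rfl | hij
    · rcases eq_or_ne i k with rfl | hik
      · simp [TensorProduct.smul_tmul, TensorProduct.tmul_smul, map_smul, mulB_basis]
      · simp [TensorProduct.smul_tmul, TensorProduct.tmul_smul, map_smul, mulB_basis, hik]
    · rcases eq_or_ne j k with rfl | hjk
      · simp [TensorProduct.smul_tmul, TensorProduct.tmul_smul, map_smul, mulB_basis, hij]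
      · simp [hij, hjk]
  · -- commutativity
    apply TensorProduct.ext'
    intro x y
    simp only [LinearMap.comp_apply, LinearEquiv.coe_coe, TensorProduct.comm_tmul]
    exact (mulB_comm_tmul v y x)
  · -- left unit
    intro x
    exact unitB_mul v horth hn0 x
  · -- right unit
    intro x
    rw [mulB_comm_tmul]
    exact unitB_mul v horth hn0 x
  · -- Frobenius law
    apply Module.Basis.ext (Module.Basis.tensorProduct v v)
    rintro ⟨i, j⟩
    rw [Module.Basis.tensorProduct_apply]
    simp only [LinearMap.comp_apply, LinearEquiv.coe_coe, TensorProduct.map_tmul,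
      LinearMap.id_coe, id_eq]
    rw [← adjoint_mulB v horth]
    rw [deltaB, Module.Basis.constr_basis, TensorProduct.assoc_symm_tmul]
    simp only [TensorProduct.map_tmul, LinearMap.id_coe, id_eq]
    rw [mulB_basis]
    rcases eq_or_ne i j with rfl | hij
    · rw [if_pos rfl, map_smul, Module.Basis.constr_basis, TensorProduct.smul_tmul']
    · rw [if_neg hij]
      simp

theorem copyableB : {ψ : H | Copyable (mulB v) (unitB v) ψ} = Set.range v := by
  ext ψ
  simp only [Set.mem_setOf_eq, Set.mem_range]
  constructor
  · intro hψ
    obtain ⟨h1, h2⟩ := hψ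
    rw [← adjoint_mulB v horth] at h1
    set c : ι → ℂ := fun i => v.repr ψ i with hcdef
    have hcp : ∀ i, c i = v.repr ψ i := fun i => rfl
    have hψsum : ψ = ∑ i, c i • v i := (Module.Basis.sum_repr v ψ).symm
    have hδψ : deltaB v ψ = ∑ i, c i • (v i ⊗ₜ[ℂ] v i) := by
      conv_lhs => rw [hψsum]
      rw [map_sum]
      exact Finset.sum_congr rfl fun i _ => by rw [map_smul, deltaB, Module.Basis.constr_basis]
    have hpair : ∀ i j : ι, ⟪v i ⊗ₜ[ℂ] v j, deltaB v ψ⟫_ℂ =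
        (if i = j then c i * (nsc v i * nsc v i) else 0) := by
      intro i j
      rw [hδψ, inner_sum]
      rw [Finset.sum_eq_single i]
      · rw [inner_smul_right, TensorIP.inner_tmul]
        rcases eq_or_ne i j with rfl | hij
        · rw [if_pos rfl, nsc]
        · rw [if_neg hij, horth j i (Ne.symm hij), mul_zero, mul_zero]
      · intro k _ hk
        rw [inner_smul_right, TensorIP.inner_tmul, horth i k (Ne.symm hk), zero_mul,
          mul_zero]
      · intro h
        exact absurd (Finset.mem_univ i) h
    have hpair2 : ∀ i j : ι, ⟪v i ⊗ₜ[ℂ] v j, ψ ⊗ₜ[ℂ] ψ⟫_ℂ =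
        (nsc v i * c i) * (nsc v j * c j) := by
      intro i j
      rw [TensorIP.inner_tmul, inner_basis_right v horth, inner_basis_right v horth]
    have hcc : ∀ i j : ι, i ≠ j → c i * c j = 0 := by
      intro i j hij
      have := (hpair i j).symm.trans (by rw [h1, hpair2])
      rw [if_neg hij] at this
      have h3 : nsc v i * nsc v j * (c i * c j) = 0 := by linear_combination -this
      rcases mul_eq_zero.mp h3 with h | h
      · exact absurd (mul_ne_zero (hn0 i) (hn0 j)) (fun hc => hc h)
      · exact h
    have hidem : ∀ i : ι, c i * c i = c i := by
      intro i
      have := (hpair i i).symm.trans (by rw [h1, hpair2])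
      rw [if_pos rfl] at this
      have h3 : nsc v i * nsc v i * c i = nsc v i * nsc v i * (c i * c i) := by
        linear_combination this
      have h4 := mul_left_cancel₀ (mul_ne_zero (hn0 i) (hn0 i)) h3
      exact h4.symm
    have hsum1 : ∑ i, c i = 1 := by
      have h3 : ⟪ψ, unitB v 1⟫_ℂ = 1 := by
        have h4 := adjoint_u_apply (unitB v) ψ
        rw [h2] at h4
        have := congrArg conj h4
        simpa using this.symm
      have h5 : ⟪ψ, unitB v 1⟫_ℂ = conj (∑ i, c i) := by
        rw [unitB, LinearMap.toSpanSingleton_apply_one, inner_sum, map_sum]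
        refine Finset.sum_congr rfl fun i _ => ?_
        rw [inner_smul_right, inner_basis_left v horth, ← hcp i]
        rw [mul_comm (conj (c i)) (nsc v i), ← mul_assoc, inv_mul_cancel₀ (hn0 i), one_mul]
      rw [h5] at h3
      have := congrArg conj h3
      simpa using this
    have hex : ∃ i, c i ≠ 0 := by
      by_contra hc
      push_neg at hc
      rw [Finset.sum_eq_zero (fun i _ => hc i)] at hsum1
      exact one_ne_zero hsum1.symm
    obtain ⟨i₀, hi₀⟩ := hex
    have hci₀ : c i₀ = 1 := by
      have h2 : c i₀ * (c i₀ - 1) = 0 := by linear_combination hidem i₀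
      rcases mul_eq_zero.mp h2 with h3 | h3
      · exact absurd h3 hi₀
      · exact sub_eq_zero.mp h3
    refine ⟨i₀, ?_⟩
    rw [hψsum]
    rw [Finset.sum_eq_single i₀]
    · rw [hci₀, one_smul]
    · intro j _ hj
      have := hcc i₀ j (Ne.symm hj)
      rw [hci₀, one_mul] at this
      rw [this, zero_smul]
    · intro h
      exact absurd (Finset.mem_univ i₀) h
  · rintro ⟨i, rfl⟩
    constructor
    · rw [← adjoint_mulB v horth, deltaB, Module.Basis.constr_basis]
    · rw [adjoint_u_apply, inner_basis_unit v horth hn0, map_one]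

end WithOrth

end Construction

theorem orthoBasis_linearIndependent {B : Set H} (hB : IsOrthogonalBasis H B) :
    LinearIndependent ℂ ((↑) : B → H) := by
  rw [linearIndependent_iff']
  intro s g hsum i hi
  have h1 : ⟪(i : H), ∑ j ∈ s, g j • (j : H)⟫_ℂ = 0 := by rw [hsum, inner_zero_right]
  rw [inner_sum, Finset.sum_eq_single_of_mem i hi] at h1
  · rw [inner_smul_right] at h1
    have h2 : ⟪(i : H), (i : H)⟫_ℂ ≠ 0 := fun h =>
      hB.2.1 (inner_self_eq_zero.mp h ▸ i.2)
    exact (mul_eq_zero.mp h1).resolve_right h2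
  · intro j _ hne
    rw [inner_smul_right, hB.1 i i.2 j j.2 (fun h => hne (Subtype.ext h.symm)), mul_zero]

theorem frobenius_equiv_orthogonal_bases' :
    Set.BijOn (fun p : (H ⊗[ℂ] H →ₗ[ℂ] H) × (ℂ →ₗ[ℂ] H) => {ψ : H | Copyable p.1 p.2 ψ})
      {p | IsFrobenius p.1 p.2} {B : Set H | IsOrthogonalBasis H B} := by
  refine ⟨?_, ?_, ?_⟩
  · -- MapsTo
    intro p hp
    exact mapsTo_frobenius hp
  · -- InjOn
    intro p hp q hq heq
    simp only [Set.mem_setOf_eq] at hp hq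
    have heq' : {ψ : H | Copyable p.1 p.2 ψ} = {ψ : H | Copyable q.1 q.2 ψ} := heq
    have hspan := (mapsTo_frobenius hp).2.2
    have hmadj : LinearMap.adjoint p.1 = LinearMap.adjoint q.1 := by
      apply LinearMap.ext_on hspan
      intro ψ hψ
      have h1 : Copyable p.1 p.2 ψ := hψ
      have h2 : Copyable q.1 q.2 ψ := by
        have : ψ ∈ {ψ : H | Copyable q.1 q.2 ψ} := heq' ▸ (hψ : ψ ∈ {ψ : H | Copyable p.1 p.2 ψ})
        exact this
      rw [h1.1, h2.1]
    have huadj : LinearMap.adjoint p.2 = LinearMap.adjoint q.2 := by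
      apply LinearMap.ext_on hspan
      intro ψ hψ
      have h1 : Copyable p.1 p.2 ψ := hψ
      have h2 : Copyable q.1 q.2 ψ := by
        have : ψ ∈ {ψ : H | Copyable q.1 q.2 ψ} := heq' ▸ (hψ : ψ ∈ {ψ : H | Copyable p.1 p.2 ψ})
        exact this
      rw [h1.2, h2.2]
    have hm1 : p.1 = q.1 := by
      have h := congrArg LinearMap.adjoint hmadj
      rwa [LinearMap.adjoint_adjoint, LinearMap.adjoint_adjoint] at h
    have hu1 : p.2 = q.2 := by
      have h := congrArg LinearMap.adjoint huadj
      rwa [LinearMap.adjoint_adjoint, LinearMap.adjoint_adjoint] at h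
    exact Prod.ext hm1 hu1
  · -- SurjOn
    intro B hB
    simp only [Set.mem_setOf_eq] at hB
    have hli : LinearIndependent ℂ ((↑) : B → H) := orthoBasis_linearIndependent hB
    haveI : Fintype ↥B := hli.setFinite.fintype
    haveI : DecidableEq ↥B := Classical.decEq _
    let v : Module.Basis ↥B ℂ H := Module.Basis.mk hli (by rw [Subtype.range_coe]; exact hB.2.2.ge)
    have hv : ∀ i : ↥B, v i = (i : H) := fun i => Module.Basis.mk_apply _ _ i
    have horth : ∀ i j : ↥B, i ≠ j → ⟪v i, v j⟫_ℂ = 0 := by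
      intro i j hij
      rw [hv, hv]
      exact hB.1 i i.2 j j.2 (fun h => hij (Subtype.ext h))
    have hn0 : ∀ i, nsc v i ≠ 0 := by
      intro i h
      rw [nsc, hv] at h
      exact hB.2.1 (inner_self_eq_zero.mp h ▸ i.2)
    refine ⟨(mulB v, unitB v), frobB v horth hn0, ?_⟩
    show {ψ : H | Copyable (mulB v) (unitB v) ψ} = B
    rw [copyableB v horth hn0]
    ext x
    constructor
    · rintro ⟨i, rfl⟩
      rw [hv]
      exact i.2
    · intro hx
      exact ⟨⟨x, hx⟩, hv _⟩

/-- Main theorem: taking copyable elements is a bijection between commutative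
†-Frobenius monoid structures on `H` and orthogonal bases of `H`. -/
theorem frobenius_equiv_orthogonal_bases :
    Set.BijOn (fun p : (H ⊗[ℂ] H →ₗ[ℂ] H) × (ℂ →ₗ[ℂ] H) => {ψ : H | Copyable p.1 p.2 ψ})
      {p | IsFrobenius p.1 p.2} {B : Set H | IsOrthogonalBasis H B} :=
  frobenius_equiv_orthogonal_bases'
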